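/- Let 0 < ε < 1 and let 𝒮 be a martingale ε-sparse family of subintervals of [0,1). Let L be a subinterval of [0,1), let K ∈ 𝐊 with L ⊆ K, and set J := K^m. Let 𝒮' be the family of all I ∈ 𝒮 with I ⊆ L such that w_k and σ_k vanish identically on I ∩ J. There exists a constant C(p) > 0, depending only on p and independent of k, ε, 𝒮, L, K, and the choices of the intervals I(J), such that Σ_{I ∈ 𝒮'} ⟨w_k⟩_I^p·⟨σ_k⟩_I·|I| ≤ C(p)·w_k(L)/(1−ε) and Σ_{I ∈ 𝒮'} ⟨σ_k⟩_I^{p'}·⟨w_k⟩_I·|I| ≤ C(p)·σ_k(L)/(1−ε), where p' := p/(p−1). -/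

import Mathlib

open MeasureTheory Set Filter

noncomputable section

namespace RTpaper

/-- The half-open interval `[a, b)` represented by the pair `(a, b)`. -/
def ivSet (I : ℝ × ℝ) : Set ℝ := Set.Ico I.1 I.2

/-- The length of the interval represented by `I`. -/
def len (I : ℝ × ℝ) : ℝ := I.2 - I.1

/-- The middle triadic child of an interval. -/
def mid (I : ℝ × ℝ) : ℝ × ℝ := (I.1 + (I.2 - I.1) / 3, I.2 - (I.2 - I.1) / 3)

/-- The families `𝐊ᵢ` of the Reguera–Thiele construction. -/
def Kfam (k : ℕ) : ℕ → Set (ℝ × ℝ)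
  | 0 => {((0 : ℝ), (1 : ℝ))}
  | (i + 1) =>
      {I | ∃ K ∈ Kfam k i, ∃ j : ℕ, j < 3 ^ (k - 1) ∧
        I = ((mid K).1 + (j : ℝ) * ((3 : ℝ) ^ (1 - (k : ℤ)) * len (mid K)),
             (mid K).1 + ((j : ℝ) + 1) * ((3 : ℝ) ^ (1 - (k : ℤ)) * len (mid K)))}

/-- The families `𝐉ᵢ` (of interest for `i ≥ 1`). -/
def Jfam (k i : ℕ) : Set (ℝ × ℝ) := {J | ∃ K ∈ Kfam k (i - 1), J = mid K}

/-- The family `𝐊 = ⋃ᵢ 𝐊ᵢ`. -/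
def KK (k : ℕ) : Set (ℝ × ℝ) := ⋃ i, Kfam k i

/-- The family `𝐉 = ⋃_{i ≥ 1} 𝐉ᵢ`. -/
def JJ (k : ℕ) : Set (ℝ × ℝ) := ⋃ i, Jfam k (i + 1)

/-- The chosen triadic interval `I(J)` adjacent to `J` of length `3^{1-k}|J|`, encoded by a
choice function `ch` deciding, for each `J`, whether `I(J)` lies to the right (`true`) or to
the left (`false`) of `J`. -/
def IJ (k : ℕ) (ch : ℝ × ℝ → Bool) (J : ℝ × ℝ) : ℝ × ℝ :=
  if ch J then (J.2, J.2 + (3 : ℝ) ^ (1 - (k : ℤ)) * len J)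
  else (J.1 - (3 : ℝ) ^ (1 - (k : ℤ)) * len J, J.1)

/-- The weight `w_k = Σ_{i ≥ 1} Σ_{J ∈ 𝐉ᵢ} (3^k/(3^{k-1}+1))^i · 1_{I(J)}`. -/
def wgt (k : ℕ) (ch : ℝ × ℝ → Bool) (x : ℝ) : ℝ :=
  ∑' i : ℕ, ∑' J : ↥(Jfam k (i + 1)),
    Set.indicator (ivSet (IJ k ch (J : ℝ × ℝ)))
      (fun _ => ((3 : ℝ) ^ k / ((3 : ℝ) ^ (k - 1) + 1)) ^ (i + 1)) x

/-- The weight `σ_k = w_k^{1-p}` on `{w_k > 0}`, and `0` elsewhere. -/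
def sgm (p : ℝ) (k : ℕ) (ch : ℝ × ℝ → Bool) (x : ℝ) : ℝ :=
  if 0 < wgt k ch x then wgt k ch x ^ (1 - p) else 0

/-- `u(I) = ∫_I u`. -/
def mass (u : ℝ → ℝ) (I : ℝ × ℝ) : ℝ := ∫ x in ivSet I, u x

/-- `⟨u⟩_I = u(I)/|I|`. -/
def avg (u : ℝ → ℝ) (I : ℝ × ℝ) : ℝ := mass u I / len I

/-- `ch_𝐊(K)`: the members of `𝐊_{i+1}` contained in `K ∈ 𝐊ᵢ`. -/
def chK (k : ℕ) (K : ℝ × ℝ) : Set (ℝ × ℝ) :=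
  {K' | ∃ i, K ∈ Kfam k i ∧ K' ∈ Kfam k (i + 1) ∧ ivSet K' ⊆ ivSet K}

/-- Triadic intervals of `ℝ`. -/
def IsTriadic (I : ℝ × ℝ) : Prop :=
  ∃ n j : ℤ, I.1 = (j : ℝ) * (3 : ℝ) ^ (-n) ∧ I.2 = ((j : ℝ) + 1) * (3 : ℝ) ^ (-n)

/-- Maximal members of `S` strictly contained in `R`. -/
def maxIn (S : Set (ℝ × ℝ)) (R : ℝ × ℝ) : Set (ℝ × ℝ) :=
  {Q | Q ∈ S ∧ ivSet Q ⊂ ivSet R ∧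
    ∀ Q' ∈ S, ivSet Q ⊆ ivSet Q' → ivSet Q' ⊂ ivSet R → ivSet Q' = ivSet Q}

/-- Martingale `ε`-sparse families of (half-open) intervals. -/
def MSparse (ε : ℝ) (S : Set (ℝ × ℝ)) : Prop :=
  S.Countable ∧ (∀ I ∈ S, I.1 < I.2) ∧
    (∀ I ∈ S, ∀ J ∈ S, ivSet I ⊆ ivSet J ∨ ivSet J ⊆ ivSet I ∨ ivSet I ∩ ivSet J = ∅) ∧
    ∀ R ∈ S, (∑' Q : ↥(maxIn S R), len (Q : ℝ × ℝ)) ≤ ε * len R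

/-- `Σ_{I ∈ F} ⟨u⟩_I^q · ⟨v⟩_I · |I|`. -/
def sumTest (q : ℝ) (u v : ℝ → ℝ) (F : Set (ℝ × ℝ)) : ℝ :=
  ∑' I : ↥F, avg u (I : ℝ × ℝ) ^ q * avg v (I : ℝ × ℝ) * len (I : ℝ × ℝ)



/-! ## Basic interval lemmas -/

lemma Ico_disj {a b c d : ℝ} (h : b ≤ c) : Set.Ico a b ∩ Set.Ico c d = ∅ := by
  ext x; simp only [Set.mem_inter_iff, Set.mem_Ico, Set.mem_empty_iff_false, iff_false]
  rintro ⟨⟨_, h1⟩, h2, _⟩; linarith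

lemma len_mid (K : ℝ × ℝ) : len (mid K) = len K / 3 := by
  simp only [len, mid]; ring

lemma mid_sub (K : ℝ × ℝ) (h : 0 < len K) : ivSet (mid K) ⊆ ivSet K := by
  simp only [ivSet, mid, len] at *
  exact Set.Ico_subset_Ico (by linarith) (by linarith)

lemma ivSet_eq_iff {K1 K2 : ℝ × ℝ} (h1 : K1.1 < K1.2) (h2 : K2.1 < K2.2) :
    ivSet K1 = ivSet K2 ↔ K1 = K2 := by
  simp only [ivSet]
  rw [Set.Ico_eq_Ico_iff (Or.inl h1)]
  constructor
  · rintro ⟨ha, hb⟩; exact Prod.ext ha hb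
  · rintro rfl; exact ⟨rfl, rfl⟩

/-! ## Geometry of the Kfam families -/

section Kgeo

variable {k : ℕ}

lemma zpow_le_one3 (hk : 1 ≤ k) : (3 : ℝ) ^ (1 - (k : ℤ)) ≤ 1 := by
  apply zpow_le_one_of_nonpos₀ (by norm_num : (1:ℝ) ≤ 3)
  omega

lemma pow_mul_zpow3 (hk : 1 ≤ k) :
    ((3 : ℕ) ^ (k - 1) : ℝ) * (3 : ℝ) ^ (1 - (k : ℤ)) = 1 := by
  push_cast
  rw [← zpow_natCast (3:ℝ) (k-1), ← zpow_add₀ (by norm_num : (3:ℝ) ≠ 0)]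
  have h : ((k - 1 : ℕ) : ℤ) + (1 - (k:ℤ)) = 0 := by omega
  rw [h, zpow_zero]

lemma Kfam_len_pos : ∀ i K, K ∈ Kfam k i → 0 < len K := by
  intro i
  induction i with
  | zero => rintro K hK; simp only [Kfam, Set.mem_singleton_iff] at hK; subst hK; norm_num [len]
  | succ n ih =>
    rintro K hK
    obtain ⟨P, hP, j, hj, rfl⟩ := hK
    have hP' := ih P hP
    have hm : 0 < len (mid P) := by rw [len_mid]; linarith
    simp only [len] at hm ⊢
    have h3 : (0:ℝ) < (3 : ℝ) ^ (1 - (k : ℤ)) := by positivity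
    nlinarith

lemma Kfam_lt (i : ℕ) (K : ℝ × ℝ) (hK : K ∈ Kfam k i) : K.1 < K.2 := by
  have := Kfam_len_pos i K hK; simp only [len] at this; linarith

lemma grid_sub_mid (hk : 1 ≤ k) (P : ℝ × ℝ) (hm : 0 < len (mid P)) (j : ℕ) (hj : j < 3^(k-1)) :
    ivSet ((mid P).1 + (j : ℝ) * ((3 : ℝ) ^ (1 - (k : ℤ)) * len (mid P)),
           (mid P).1 + ((j : ℝ) + 1) * ((3 : ℝ) ^ (1 - (k : ℤ)) * len (mid P)))
      ⊆ ivSet (mid P) := by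
  have h3 : (0:ℝ) < (3 : ℝ) ^ (1 - (k : ℤ)) := by positivity
  have hu : 0 < (3 : ℝ) ^ (1 - (k : ℤ)) * len (mid P) := by positivity
  have hkey : ((j:ℝ) + 1) * ((3 : ℝ) ^ (1 - (k : ℤ)) * len (mid P)) ≤ len (mid P) := by
    have hj' : ((j:ℝ) + 1) ≤ ((3:ℕ) ^ (k-1) : ℝ) := by
      have h2 : ((j+1 : ℕ):ℝ) ≤ ((3^(k-1) : ℕ) : ℝ) := by exact_mod_cast hj
      push_cast at h2 ⊢; linarith
    calc ((j:ℝ) + 1) * ((3 : ℝ) ^ (1 - (k : ℤ)) * len (mid P))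
        ≤ ((3:ℕ) ^ (k-1) : ℝ) * ((3 : ℝ) ^ (1 - (k : ℤ)) * len (mid P)) :=
          mul_le_mul_of_nonneg_right hj' (le_of_lt hu)
      _ = (((3:ℕ) ^ (k-1) : ℝ) * (3 : ℝ) ^ (1 - (k : ℤ))) * len (mid P) := by ring
      _ = len (mid P) := by rw [pow_mul_zpow3 hk]; ring
  have hjnn : (0:ℝ) ≤ (j:ℝ) * ((3 : ℝ) ^ (1 - (k : ℤ)) * len (mid P)) :=
    mul_nonneg (Nat.cast_nonneg j) (le_of_lt hu)
  have hmid2 : (mid P).2 = (mid P).1 + len (mid P) := by simp [len]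
  simp only [ivSet]
  apply Set.Ico_subset_Ico (by linarith) (by rw [hmid2]; linarith)

lemma child_sub_mid (hk : 1 ≤ k) {i : ℕ} {K : ℝ × ℝ} (hK : K ∈ Kfam k (i+1)) :
    ∃ P ∈ Kfam k i, ivSet K ⊆ ivSet (mid P) := by
  obtain ⟨P, hP, j, hj, rfl⟩ := hK
  have hPl := Kfam_len_pos (k := k) i P hP
  have hm : 0 < len (mid P) := by rw [len_mid]; linarith
  exact ⟨P, hP, grid_sub_mid hk P hm j hj⟩

lemma Kfam_same_level (hk : 1 ≤ k) :
    ∀ i (K1 K2 : ℝ × ℝ), K1 ∈ Kfam k i → K2 ∈ Kfam k i →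
      K1 = K2 ∨ ivSet K1 ∩ ivSet K2 = ∅ := by
  intro i
  induction i with
  | zero =>
    rintro K1 K2 h1 h2
    simp only [Kfam, Set.mem_singleton_iff] at h1 h2; left; rw [h1, h2]
  | succ n ih =>
    rintro K1 K2 h1 h2
    obtain ⟨P1, hP1, hs1⟩ := child_sub_mid hk h1
    obtain ⟨P2, hP2, hs2⟩ := child_sub_mid hk h2
    rcases ih P1 P2 hP1 hP2 with heq | hdisj
    case inr =>
      right
      have hsub1 : ivSet K1 ⊆ ivSet P1 := hs1.trans (mid_sub P1 (Kfam_len_pos n P1 hP1))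
      have hsub2 : ivSet K2 ⊆ ivSet P2 := hs2.trans (mid_sub P2 (Kfam_len_pos n P2 hP2))
      rw [← Set.subset_empty_iff, ← hdisj]
      exact Set.inter_subset_inter hsub1 hsub2
    case inl =>
      clear hs1 hs2
      obtain ⟨Q1, hQ1, j1, hj1, rfl⟩ := h1
      obtain ⟨Q2, hQ2, j2, hj2, rfl⟩ := h2
      -- Q1 and Q2 are possibly different from P1, P2; redo with same-level on Q1 Q2
      rcases ih Q1 Q2 hQ1 hQ2 with heqQ | hdisjQ
      · subst heqQ
        have hQl := Kfam_len_pos (k := k) n Q1 hQ1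
        have hm : 0 < len (mid Q1) := by rw [len_mid]; linarith
        have h3 : (0:ℝ) < (3 : ℝ) ^ (1 - (k : ℤ)) := by positivity
        have hu : 0 < (3 : ℝ) ^ (1 - (k : ℤ)) * len (mid Q1) := by positivity
        rcases lt_trichotomy j1 j2 with hlt | heqj | hgt
        · right
          apply Ico_disj
          have hc : ((j1:ℝ) + 1) ≤ (j2:ℝ) := by exact_mod_cast hlt
          dsimp only
          nlinarith
        · left; rw [heqj]
        · right
          rw [Set.inter_comm]
          apply Ico_disj
          have hc : ((j2:ℝ) + 1) ≤ (j1:ℝ) := by exact_mod_cast hgt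
          dsimp only
          nlinarith
      · right
        have hmq1 : 0 < len (mid Q1) := by
          rw [len_mid]; linarith [Kfam_len_pos (k := k) n Q1 hQ1]
        have hmq2 : 0 < len (mid Q2) := by
          rw [len_mid]; linarith [Kfam_len_pos (k := k) n Q2 hQ2]
        have hsub1 := (grid_sub_mid hk Q1 hmq1 j1 hj1).trans
          (mid_sub Q1 (Kfam_len_pos n Q1 hQ1))
        have hsub2 := (grid_sub_mid hk Q2 hmq2 j2 hj2).trans
          (mid_sub Q2 (Kfam_len_pos n Q2 hQ2))
        rw [← Set.subset_empty_iff, ← hdisjQ]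
        exact Set.inter_subset_inter hsub1 hsub2

lemma Kfam_cross_level (hk : 1 ≤ k) :
    ∀ m i (K K' : ℝ × ℝ), i < m → K ∈ Kfam k i → K' ∈ Kfam k m →
      ivSet K' ⊆ ivSet (mid K) ∨ ivSet K' ∩ ivSet K = ∅ := by
  intro m
  induction m with
  | zero => intro i K K' h; omega
  | succ n ih =>
    intro i K K' him hK hK'
    obtain ⟨P, hP, hsP⟩ := child_sub_mid hk hK'
    rcases Nat.lt_or_ge i n with hin | hin
    · rcases ih i K P hin hK hP with hsub | hdisj
      · left; exact hsP.trans ((mid_sub P (Kfam_len_pos n P hP)).trans hsub)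
      · right
        rw [← Set.subset_empty_iff, ← hdisj]
        exact Set.inter_subset_inter (hsP.trans (mid_sub P (Kfam_len_pos n P hP)))
          (le_refl _)
    · have : i = n := by omega
      subst this
      rcases Kfam_same_level hk i P K hP hK with heq | hdisj
      · subst heq; left; exact hsP
      · right
        rw [← Set.subset_empty_iff, ← hdisj]
        exact Set.inter_subset_inter (hsP.trans (mid_sub P (Kfam_len_pos i P hP))) (le_refl _)

end Kgeo
section Kgeo2

variable {k : ℕ} {ch : ℝ × ℝ → Bool}

lemma IJ_disj_self (k : ℕ) (ch : ℝ × ℝ → Bool) (J : ℝ × ℝ) :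
    ivSet (IJ k ch J) ∩ ivSet J = ∅ := by
  unfold IJ
  by_cases h : ch J <;> simp only [h, if_true, if_false, Bool.false_eq_true, ivSet]
  · rw [Set.inter_comm]; exact Ico_disj (le_refl _)
  · exact Ico_disj (le_refl _)

lemma IJ_sub (hk : 1 ≤ k) {i : ℕ} {K : ℝ × ℝ} (hK : K ∈ Kfam k i) :
    ivSet (IJ k ch (mid K)) ⊆ ivSet K := by
  have hKl := Kfam_len_pos i K hK
  have hm : 0 < len (mid K) := by rw [len_mid]; linarith
  have h3 : (0:ℝ) < (3 : ℝ) ^ (1 - (k : ℤ)) := by positivity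
  have h31 := zpow_le_one3 (k := k) hk
  have hle : (3 : ℝ) ^ (1 - (k : ℤ)) * len (mid K) ≤ len (mid K) := by nlinarith
  have hmid1 : (mid K).1 = K.1 + len K / 3 := by simp only [mid, len]
  have hmid2 : (mid K).2 = K.2 - len K / 3 := by simp only [mid, len]
  have hlm : len (mid K) = len K / 3 := len_mid K
  simp only [len] at hKl
  unfold IJ
  by_cases h : ch (mid K) <;> simp only [h, if_true, if_false, Bool.false_eq_true, ivSet] <;>
    apply Set.Ico_subset_Ico <;>
    first
      | (rw [hmid2]; linarith)
      | (rw [hmid1]; linarith)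
      | (rw [hmid2, hlm, len] at *; linarith)
      | (rw [hmid1, hlm, len] at *; linarith)

lemma vol_IJ (k : ℕ) (ch : ℝ × ℝ → Bool) (J : ℝ × ℝ) :
    volume (ivSet (IJ k ch J)) = ENNReal.ofReal ((3 : ℝ) ^ (1 - (k : ℤ)) * len J) := by
  unfold IJ
  by_cases h : ch J <;> simp only [h, if_true, if_false, Bool.false_eq_true, ivSet] <;>
    rw [Real.volume_Ico] <;> congr 1 <;> ring

lemma mid_inj : Function.Injective mid := by
  rintro ⟨a, b⟩ ⟨c, d⟩ h
  simp only [mid, Prod.mk.injEq] at h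
  obtain ⟨h1, h2⟩ := h
  have ha : a = c := by linarith
  have hb : b = d := by linarith
  simp [ha, hb]

lemma Kfam_finite (k : ℕ) : ∀ i, (Kfam k i).Finite := by
  intro i
  induction i with
  | zero => exact Set.finite_singleton _
  | succ n ih =>
    have hsub : Kfam k (n+1) ⊆ ⋃ K ∈ Kfam k n,
        (fun j : ℕ => ((mid K).1 + (j : ℝ) * ((3 : ℝ) ^ (1 - (k : ℤ)) * len (mid K)),
          (mid K).1 + ((j : ℝ) + 1) * ((3 : ℝ) ^ (1 - (k : ℤ)) * len (mid K)))) ''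
          (Set.Iio (3 ^ (k-1))) := by
      rintro K' ⟨P, hP, j, hj, rfl⟩
      exact Set.mem_biUnion hP ⟨j, hj, rfl⟩
    exact Set.Finite.subset (Set.Finite.biUnion ih
      (fun K _ => (Set.finite_Iio _).image _)) hsub

lemma Jfam_eq_image (k i : ℕ) : Jfam k (i + 1) = mid '' Kfam k i := by
  unfold Jfam
  simp only [Nat.add_sub_cancel]
  ext J
  simp only [Set.mem_setOf_eq, Set.mem_image]
  constructor
  · rintro ⟨K, hK, rfl⟩; exact ⟨K, hK, rfl⟩
  · rintro ⟨K, hK, rfl⟩; exact ⟨K, hK, rfl⟩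

lemma Jfam_finite (k i : ℕ) : (Jfam k (i + 1)).Finite := by
  rw [Jfam_eq_image]; exact (Kfam_finite k i).image _

/-- The key structural lemma: if `x ∈ K \ mid K` with `K ∈ Kfam k i₀`, then the only
interval `I(J')` (over all generations) that can contain `x` is `I(mid K)`. -/
lemma struct (hk : 1 ≤ k) {i₀ : ℕ} {K : ℝ × ℝ} (hK : K ∈ Kfam k i₀) {x : ℝ}
    (hx : x ∈ ivSet K) (hx' : x ∉ ivSet (mid K)) {m : ℕ} {J' : ℝ × ℝ}
    (hJ' : J' ∈ Jfam k (m + 1)) (hxJ : x ∈ ivSet (IJ k ch J')) :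
    m = i₀ ∧ J' = mid K := by
  rw [Jfam_eq_image] at hJ'
  obtain ⟨K'', hK'', rfl⟩ := hJ'
  have hxK'' : x ∈ ivSet K'' := IJ_sub hk hK'' hxJ
  have hnJ : x ∉ ivSet (mid K'') := by
    intro hmem
    have : x ∈ ivSet (IJ k ch (mid K'')) ∩ ivSet (mid K'') := ⟨hxJ, hmem⟩
    rw [IJ_disj_self] at this
    exact this
  rcases lt_trichotomy m i₀ with hlt | heq | hgt
  · -- K is deeper; K ⊆ mid K'' or disjoint
    rcases Kfam_cross_level hk i₀ m K'' K hlt hK'' hK with hsub | hdisj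
    · exact absurd (hsub hx) hnJ
    · exact absurd (Set.mem_inter hx hxK'') (by rw [hdisj]; exact id)
  · subst heq
    rcases Kfam_same_level hk m K'' K hK'' hK with heq2 | hdisj
    · exact ⟨rfl, by rw [heq2]⟩
    · exact absurd (Set.mem_inter hxK'' hx) (by rw [hdisj]; exact id)
  · rcases Kfam_cross_level hk m i₀ K K'' hgt hK hK'' with hsub | hdisj
    · exact absurd (hsub hxK'') hx'
    · exact absurd (Set.mem_inter hxK'' hx) (by rw [hdisj]; exact id)

lemma uniq (hk : 1 ≤ k) {i1 i2 : ℕ} {J1 J2 : ℝ × ℝ} (h1 : J1 ∈ Jfam k (i1 + 1))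
    (h2 : J2 ∈ Jfam k (i2 + 1)) {x : ℝ} (hx1 : x ∈ ivSet (IJ k ch J1))
    (hx2 : x ∈ ivSet (IJ k ch J2)) : i1 = i2 ∧ J1 = J2 := by
  have h1' := h1
  rw [Jfam_eq_image] at h1'
  obtain ⟨K1, hK1, rfl⟩ := h1'
  have hxK1 : x ∈ ivSet K1 := IJ_sub hk hK1 hx1
  have hnJ : x ∉ ivSet (mid K1) := by
    intro hmem
    have : x ∈ ivSet (IJ k ch (mid K1)) ∩ ivSet (mid K1) := ⟨hx1, hmem⟩
    rw [IJ_disj_self] at this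
    exact this
  obtain ⟨he, hJ⟩ := struct hk hK1 hxK1 hnJ h2 hx2
  exact ⟨he.symm, hJ.symm⟩

end Kgeo2
section Wstruct

variable {k : ℕ} {ch : ℝ × ℝ → Bool}

/-- The coefficient of generation `i` in `wgt`. -/
def coefw (k i : ℕ) : ℝ := ((3 : ℝ) ^ k / ((3 : ℝ) ^ (k - 1) + 1)) ^ (i + 1)

lemma one_le_coefw (hk : 1 ≤ k) (i : ℕ) : 1 ≤ coefw k i := by
  unfold coefw
  apply one_le_pow₀
  rw [le_div_iff₀ (by positivity)]
  have h1 : (1:ℝ) ≤ (3:ℝ)^(k-1) := one_le_pow₀ (by norm_num)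
  have h2 : (3:ℝ)^k = 3 * (3:ℝ)^(k-1) := by
    rw [← pow_succ']; congr 1; omega
  linarith

lemma coefw_pos (hk : 1 ≤ k) (i : ℕ) : 0 < coefw k i :=
  lt_of_lt_of_le one_pos (one_le_coefw hk i)

lemma wgt_eq_of_mem (hk : 1 ≤ k) {i0 : ℕ} {J : ℝ × ℝ} {x : ℝ} (hJ : J ∈ Jfam k (i0 + 1))
    (hx : x ∈ ivSet (IJ k ch J)) : wgt k ch x = coefw k i0 := by
  unfold wgt
  have houter : ∀ i, i ≠ i0 → (∑' J' : ↥(Jfam k (i + 1)),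
      (ivSet (IJ k ch (J' : ℝ × ℝ))).indicator
        (fun _ => ((3 : ℝ) ^ k / ((3 : ℝ) ^ (k - 1) + 1)) ^ (i + 1)) x) = 0 := by
    intro i hi
    have hz : ∀ J' : ↥(Jfam k (i + 1)), (ivSet (IJ k ch (J' : ℝ × ℝ))).indicator
        (fun _ => ((3 : ℝ) ^ k / ((3 : ℝ) ^ (k - 1) + 1)) ^ (i + 1)) x = 0 := by
      intro J'
      apply Set.indicator_of_notMem
      intro hx'
      exact hi (uniq hk J'.2 hJ hx' hx).1
    rw [tsum_congr hz, tsum_zero]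
  rw [tsum_eq_single i0 houter]
  rw [tsum_eq_single (⟨J, hJ⟩ : ↥(Jfam k (i0 + 1))) ?_]
  · exact Set.indicator_of_mem hx _
  · intro J' hne
    apply Set.indicator_of_notMem
    intro hx'
    exact hne (Subtype.ext (uniq hk J'.2 hJ hx' hx).2)

lemma wgt_eq_zero {x : ℝ}
    (hx : ∀ (i : ℕ) (J : ℝ × ℝ), J ∈ Jfam k (i + 1) → x ∉ ivSet (IJ k ch J)) :
    wgt k ch x = 0 := by
  unfold wgt
  have houter : ∀ i : ℕ, (∑' J' : ↥(Jfam k (i + 1)),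
      (ivSet (IJ k ch (J' : ℝ × ℝ))).indicator
        (fun _ => ((3 : ℝ) ^ k / ((3 : ℝ) ^ (k - 1) + 1)) ^ (i + 1)) x) = 0 := by
    intro i
    have hz : ∀ J' : ↥(Jfam k (i + 1)), (ivSet (IJ k ch (J' : ℝ × ℝ))).indicator
        (fun _ => ((3 : ℝ) ^ k / ((3 : ℝ) ^ (k - 1) + 1)) ^ (i + 1)) x = 0 := by
      intro J'
      exact Set.indicator_of_notMem (hx i J' J'.2) _
    rw [tsum_congr hz, tsum_zero]
  rw [tsum_congr houter, tsum_zero]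

lemma wgt_nonneg (k : ℕ) (ch : ℝ × ℝ → Bool) (x : ℝ) : 0 ≤ wgt k ch x := by
  unfold wgt
  apply tsum_nonneg
  intro i
  apply tsum_nonneg
  intro J
  apply Set.indicator_nonneg
  intro y _
  positivity

lemma mid_mem_Jfam {i : ℕ} {K : ℝ × ℝ} (hK : K ∈ Kfam k i) : mid K ∈ Jfam k (i + 1) := by
  rw [Jfam_eq_image]; exact ⟨K, hK, rfl⟩

/-- Claim 1: on `K \ mid K`, the weight equals `coefw k i₀ · 1_{I(mid K)}`. -/
lemma wgt_on_K (hk : 1 ≤ k) {i₀ : ℕ} {K : ℝ × ℝ} (hK : K ∈ Kfam k i₀) {x : ℝ}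
    (hx : x ∈ ivSet K) (hx' : x ∉ ivSet (mid K)) :
    wgt k ch x = (ivSet (IJ k ch (mid K))).indicator (fun _ => coefw k i₀) x := by
  by_cases hxa : x ∈ ivSet (IJ k ch (mid K))
  · rw [Set.indicator_of_mem hxa]
    exact wgt_eq_of_mem hk (mid_mem_Jfam hK) hxa
  · rw [Set.indicator_of_notMem hxa]
    apply wgt_eq_zero
    intro m J' hJ' hxJ
    obtain ⟨hm, rfl⟩ := struct hk hK hx hx' hJ' hxJ
    exact hxa hxJ

lemma wgt_cases (hk : 1 ≤ k) (x : ℝ) :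
    wgt k ch x = 0 ∨ ∃ i, wgt k ch x = coefw k i := by
  by_cases h : ∃ (i : ℕ) (J : ℝ × ℝ), J ∈ Jfam k (i + 1) ∧ x ∈ ivSet (IJ k ch J)
  · obtain ⟨i, J, hJ, hx⟩ := h
    exact Or.inr ⟨i, wgt_eq_of_mem hk hJ hx⟩
  · push_neg at h
    exact Or.inl (wgt_eq_zero h)

lemma one_le_wgt_of_pos (hk : 1 ≤ k) {x : ℝ} (hx : 0 < wgt k ch x) : 1 ≤ wgt k ch x := by
  rcases wgt_cases (ch := ch) hk x with h | ⟨i, h⟩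
  · rw [h] at hx; exact absurd hx (lt_irrefl 0)
  · rw [h]; exact one_le_coefw hk i

lemma sgm_nonneg (p : ℝ) (k : ℕ) (ch : ℝ × ℝ → Bool) (x : ℝ) : 0 ≤ sgm p k ch x := by
  unfold sgm
  split
  · exact Real.rpow_nonneg (wgt_nonneg k ch x) _
  · exact le_refl 0

lemma sgm_le_one (hk : 1 ≤ k) {p : ℝ} (hp : 1 < p) (x : ℝ) : sgm p k ch x ≤ 1 := by
  unfold sgm
  split
  · next h =>
      exact Real.rpow_le_one_of_one_le_of_nonpos (one_le_wgt_of_pos hk h) (by linarith)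
  · exact zero_le_one

end Wstruct
open scoped ENNReal NNReal

section Wmeas

variable {k : ℕ} {ch : ℝ × ℝ → Bool}

lemma ivSet_meas (I : ℝ × ℝ) : MeasurableSet (ivSet I) := measurableSet_Ico

lemma vol_ivSet (I : ℝ × ℝ) : volume (ivSet I) = ENNReal.ofReal (len I) := Real.volume_Ico

/-- `wgt` as an `ℝ≥0∞`-valued sum. -/
def Wnn (k : ℕ) (ch : ℝ × ℝ → Bool) : ℝ → ℝ≥0∞ := fun x =>
  ∑' i : ℕ, ∑' J : ↥(Jfam k (i + 1)),
    (ivSet (IJ k ch (J : ℝ × ℝ))).indicator (fun _ => ENNReal.ofReal (coefw k i)) x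

lemma Wnn_meas (k : ℕ) (ch : ℝ × ℝ → Bool) : Measurable (Wnn k ch) := by
  unfold Wnn
  apply Measurable.ennreal_tsum
  intro i
  haveI := (Jfam_finite k i).to_subtype
  apply Measurable.ennreal_tsum
  intro J
  exact Measurable.indicator measurable_const (ivSet_meas _)

lemma Wnn_eq_ofReal (hk : 1 ≤ k) (x : ℝ) : Wnn k ch x = ENNReal.ofReal (wgt k ch x) := by
  by_cases h : ∃ (i : ℕ) (J : ℝ × ℝ), J ∈ Jfam k (i + 1) ∧ x ∈ ivSet (IJ k ch J)
  · obtain ⟨i0, J, hJ, hx⟩ := h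
    rw [wgt_eq_of_mem hk hJ hx]
    unfold Wnn
    have houter : ∀ i, i ≠ i0 → (∑' J' : ↥(Jfam k (i + 1)),
        (ivSet (IJ k ch (J' : ℝ × ℝ))).indicator
          (fun _ => ENNReal.ofReal (coefw k i)) x) = 0 := by
      intro i hi
      have hz : ∀ J' : ↥(Jfam k (i + 1)), (ivSet (IJ k ch (J' : ℝ × ℝ))).indicator
          (fun _ => ENNReal.ofReal (coefw k i)) x = 0 := by
        intro J'
        apply Set.indicator_of_notMem
        intro hx'
        exact hi (uniq hk J'.2 hJ hx' hx).1
      rw [tsum_congr hz, tsum_zero]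
    rw [tsum_eq_single i0 houter]
    rw [tsum_eq_single (⟨J, hJ⟩ : ↥(Jfam k (i0 + 1))) ?_]
    · exact Set.indicator_of_mem hx _
    · intro J' hne
      apply Set.indicator_of_notMem
      intro hx'
      exact hne (Subtype.ext (uniq hk J'.2 hJ hx' hx).2)
  · push_neg at h
    rw [wgt_eq_zero h, ENNReal.ofReal_zero]
    unfold Wnn
    have houter : ∀ i : ℕ, (∑' J' : ↥(Jfam k (i + 1)),
        (ivSet (IJ k ch (J' : ℝ × ℝ))).indicator
          (fun _ => ENNReal.ofReal (coefw k i)) x) = 0 := by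
      intro i
      have hz : ∀ J' : ↥(Jfam k (i + 1)), (ivSet (IJ k ch (J' : ℝ × ℝ))).indicator
          (fun _ => ENNReal.ofReal (coefw k i)) x = 0 := by
        intro J'
        exact Set.indicator_of_notMem (h i J' J'.2) _
      rw [tsum_congr hz, tsum_zero]
    rw [tsum_congr houter, tsum_zero]

lemma wgt_meas (hk : 1 ≤ k) : Measurable (wgt k ch) := by
  have : wgt k ch = fun x => (Wnn k ch x).toReal := by
    funext x
    rw [Wnn_eq_ofReal hk, ENNReal.toReal_ofReal (wgt_nonneg k ch x)]
  rw [this]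
  exact (Wnn_meas k ch).ennreal_toReal

lemma sgm_meas (hk : 1 ≤ k) (p : ℝ) : Measurable (sgm p k ch) := by
  unfold sgm
  apply Measurable.ite
  · exact measurableSet_lt measurable_const (wgt_meas hk)
  · exact (wgt_meas hk).pow measurable_const
  · exact measurable_const

/-- Total length of level `i` of the `Kfam` construction decays like `3⁻ⁱ`. -/
lemma volsum_Kfam (hk : 1 ≤ k) : ∀ i : ℕ,
    (∑' K : ↥(Kfam k i), ENNReal.ofReal (len (K : ℝ × ℝ))) ≤ (3 : ℝ≥0∞)⁻¹ ^ i := by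
  have hvol : ∀ i, (∑' K : ↥(Kfam k i), ENNReal.ofReal (len (K : ℝ × ℝ)))
      = volume (⋃ K ∈ Kfam k i, ivSet K) := by
    intro i
    rw [measure_biUnion ((Kfam_finite k i).countable) ?_ (fun K _ => ivSet_meas K)]
    · apply tsum_congr
      intro K
      exact (vol_ivSet _).symm
    · intro K1 h1 K2 h2 hne
      rcases Kfam_same_level hk i K1 K2 h1 h2 with heq | hdisj
      · exact absurd heq hne
      · exact Set.disjoint_iff_inter_eq_empty.mpr hdisj
  intro i
  induction i with
  | zero =>
    rw [hvol 0, pow_zero]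
    have : (⋃ K ∈ Kfam k 0, ivSet K) = ivSet ((0:ℝ), (1:ℝ)) := by
      simp [Kfam]
    rw [this]
    simp only [ivSet, Real.volume_Ico]
    norm_num
  | succ n ihn =>
    rw [hvol (n+1)]
    have hsub : (⋃ K ∈ Kfam k (n+1), ivSet K) ⊆ ⋃ K ∈ Kfam k n, ivSet (mid K) := by
      intro x hx
      simp only [Set.mem_iUnion] at hx ⊢
      obtain ⟨K', hK', hxK'⟩ := hx
      obtain ⟨P, hP, hsP⟩ := child_sub_mid hk hK'
      exact ⟨P, hP, hsP hxK'⟩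
    calc volume (⋃ K ∈ Kfam k (n+1), ivSet K)
        ≤ volume (⋃ K ∈ Kfam k n, ivSet (mid K)) := measure_mono hsub
      _ ≤ ∑' K : ↥(Kfam k n), volume (ivSet (mid (K : ℝ × ℝ))) :=
          measure_biUnion_le _ ((Kfam_finite k n).countable) _
      _ = ∑' K : ↥(Kfam k n), (3:ℝ≥0∞)⁻¹ * ENNReal.ofReal (len (K : ℝ × ℝ)) := by
          apply tsum_congr
          intro K
          have h1 : volume (ivSet (mid (K : ℝ × ℝ))) = ENNReal.ofReal (len (mid (K:ℝ×ℝ))) :=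
            vol_ivSet _
          rw [h1, len_mid]
          rw [div_eq_inv_mul, ENNReal.ofReal_mul (by norm_num)]
          congr 1
          rw [ENNReal.ofReal_inv_of_pos (by norm_num)]
          norm_num
      _ = (3:ℝ≥0∞)⁻¹ * ∑' K : ↥(Kfam k n), ENNReal.ofReal (len (K : ℝ × ℝ)) :=
          ENNReal.tsum_mul_left
      _ ≤ (3:ℝ≥0∞)⁻¹ * (3:ℝ≥0∞)⁻¹ ^ n := by
          exact mul_le_mul_right ihn _
      _ = (3:ℝ≥0∞)⁻¹ ^ (n+1) := by rw [pow_succ]; ring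

end Wmeas
section Wint

variable {k : ℕ} {ch : ℝ × ℝ → Bool}

lemma pow3k (hk : 1 ≤ k) : (3:ℝ)^k = 3 * (3:ℝ)^(k-1) := by
  rw [← pow_succ']; congr 1; omega

lemma zpow31 (hk : 1 ≤ k) : (3:ℝ) ^ (1 - (k:ℤ)) = ((3:ℝ)^(k-1))⁻¹ := by
  have h := pow_mul_zpow3 (k := k) hk
  have hc : ((3:ℕ)^(k-1) : ℝ) = (3:ℝ)^(k-1) := by push_cast; ring
  rw [hc] at h
  exact eq_inv_of_mul_eq_one_right h

lemma tsum_Jfam (k i : ℕ) (F : (ℝ × ℝ) → ℝ≥0∞) :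
    ∑' J : ↥(Jfam k (i+1)), F (J : ℝ × ℝ) = ∑' K : ↥(Kfam k i), F (mid (K : ℝ × ℝ)) := by
  rw [Jfam_eq_image]
  rw [← Equiv.tsum_eq (Equiv.Set.image mid (Kfam k i) mid_inj) (fun J => F (J : ℝ × ℝ))]
  apply tsum_congr
  intro K
  congr 1

lemma real_gen_bound (hk : 1 ≤ k) (i : ℕ) :
    coefw k i * (((3:ℝ)^(k-1))⁻¹ / 3) * ((3:ℝ)⁻¹)^i
      ≤ ((3:ℝ)^(k-1) / ((3:ℝ)^(k-1) + 1)) ^ i := by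
  set a : ℝ := (3:ℝ)^(k-1) with ha
  have ha1 : (1:ℝ) ≤ a := one_le_pow₀ (by norm_num)
  have ha0 : (0:ℝ) < a := by linarith
  set r : ℝ := a/(a+1) with hr
  have hr0 : (0:ℝ) ≤ r := by positivity
  have hr1 : r ≤ 1 := by rw [hr, div_le_one (by linarith)]; linarith
  have hcoef : coefw k i = 3^(i+1) * r^(i+1) := by
    unfold coefw
    rw [pow3k hk, ← ha]
    rw [show 3 * a / (a + 1) = 3 * r by rw [hr]; ring]
    rw [mul_pow]
  have e3 : (3:ℝ)^(i+1) * 3⁻¹ * ((3:ℝ)⁻¹)^i = 1 := by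
    rw [inv_pow, pow_succ]
    field_simp
  calc coefw k i * (a⁻¹ / 3) * ((3:ℝ)⁻¹)^i
      = r^(i+1) * a⁻¹ * ((3:ℝ)^(i+1) * 3⁻¹ * ((3:ℝ)⁻¹)^i) := by rw [hcoef]; ring
    _ = r^(i+1) * a⁻¹ := by rw [e3, mul_one]
    _ ≤ r^i * 1 := by
        apply mul_le_mul (pow_le_pow_of_le_one hr0 hr1 (by omega))
          (inv_le_one_of_one_le₀ ha1) (by positivity) (by positivity)
    _ = r^i := mul_one _

lemma lintegral_Wnn_lt_top (hk : 1 ≤ k) : ∫⁻ x, Wnn k ch x ∂volume < ⊤ := by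
  set a : ℝ := (3:ℝ)^(k-1) with ha
  have ha1 : (1:ℝ) ≤ a := one_le_pow₀ (by norm_num)
  have ha0 : (0:ℝ) < a := by linarith
  set r : ℝ := a/(a+1) with hr
  have hr0 : (0:ℝ) ≤ r := by positivity
  have hr1 : r < 1 := by rw [hr, div_lt_one (by linarith)]; linarith
  have hgen : ∀ i : ℕ, (∫⁻ x, ∑' J : ↥(Jfam k (i + 1)),
      (ivSet (IJ k ch (J : ℝ × ℝ))).indicator (fun _ => ENNReal.ofReal (coefw k i)) x)
        ≤ ENNReal.ofReal (r ^ i) := by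
    intro i
    haveI := (Jfam_finite k i).to_subtype
    have h1 : (∫⁻ x, ∑' J : ↥(Jfam k (i + 1)),
        (ivSet (IJ k ch (J : ℝ × ℝ))).indicator (fun _ => ENNReal.ofReal (coefw k i)) x)
        = ∑' J : ↥(Jfam k (i + 1)), ENNReal.ofReal (coefw k i)
            * volume (ivSet (IJ k ch (J : ℝ × ℝ))) := by
      rw [lintegral_tsum (fun J => (Measurable.indicator measurable_const
        (ivSet_meas _)).aemeasurable)]
      apply tsum_congr
      intro J
      exact lintegral_indicator_const (ivSet_meas _) _
    rw [h1]
    have h2 : (∑' J : ↥(Jfam k (i + 1)), ENNReal.ofReal (coefw k i)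
        * volume (ivSet (IJ k ch (J : ℝ × ℝ))))
        = ∑' K : ↥(Kfam k i), ENNReal.ofReal (coefw k i) * (ENNReal.ofReal (a⁻¹ / 3)
            * ENNReal.ofReal (len (K : ℝ × ℝ))) := by
      rw [tsum_Jfam k i (fun J => ENNReal.ofReal (coefw k i) * volume (ivSet (IJ k ch J)))]
      apply tsum_congr
      intro K
      congr 1
      rw [vol_IJ, len_mid, zpow31 hk, ← ha]
      rw [show a⁻¹ * (len (K:ℝ×ℝ) / 3) = (a⁻¹/3) * len (K:ℝ×ℝ) by ring]
      exact ENNReal.ofReal_mul (by positivity)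
    rw [h2]
    rw [ENNReal.tsum_mul_left, ENNReal.tsum_mul_left]
    calc ENNReal.ofReal (coefw k i) * (ENNReal.ofReal (a⁻¹/3)
          * ∑' K : ↥(Kfam k i), ENNReal.ofReal (len (K : ℝ × ℝ)))
        ≤ ENNReal.ofReal (coefw k i) * (ENNReal.ofReal (a⁻¹/3) * (3:ℝ≥0∞)⁻¹ ^ i) := by
          exact mul_le_mul_right (mul_le_mul_right (volsum_Kfam hk i) _) _
      _ = ENNReal.ofReal (coefw k i * (a⁻¹/3) * ((3:ℝ)⁻¹)^i) := by
          rw [show (3:ℝ≥0∞)⁻¹ = ENNReal.ofReal ((3:ℝ)⁻¹) by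
            rw [ENNReal.ofReal_inv_of_pos (by norm_num)]
            norm_num]
          rw [← ENNReal.ofReal_pow (by norm_num)]
          rw [← ENNReal.ofReal_mul (by positivity), ← ENNReal.ofReal_mul (coefw_pos hk i).le]
          ring_nf
      _ ≤ ENNReal.ofReal (r ^ i) := ENNReal.ofReal_le_ofReal (real_gen_bound hk i)
  have hW : (∫⁻ x, Wnn k ch x ∂volume) ≤ ∑' i : ℕ, ENNReal.ofReal (r ^ i) := by
    unfold Wnn
    rw [lintegral_tsum ?_]
    · exact Summable.tsum_le_tsum hgen ENNReal.summable ENNReal.summable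
    · intro i
      haveI := (Jfam_finite k i).to_subtype
      exact (Measurable.ennreal_tsum fun J => Measurable.indicator measurable_const
        (ivSet_meas _)).aemeasurable
  apply lt_of_le_of_lt hW
  have : ∀ i : ℕ, ENNReal.ofReal (r ^ i) = (ENNReal.ofReal r) ^ i := fun i =>
    ENNReal.ofReal_pow hr0 i
  rw [tsum_congr this, ENNReal.tsum_geometric]
  rw [ENNReal.inv_lt_top, tsub_pos_iff_lt]
  exact ENNReal.ofReal_lt_one.mpr hr1

lemma wgt_integrableOn (hk : 1 ≤ k) {s : Set ℝ} :
    IntegrableOn (wgt k ch) s volume := by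
  refine ⟨(wgt_meas hk).aestronglyMeasurable, ?_⟩
  unfold HasFiniteIntegral
  have heq : ∀ x : ℝ, (‖wgt k ch x‖₊ : ℝ≥0∞) = Wnn k ch x := by
    intro x
    have := Real.enorm_eq_ofReal (wgt_nonneg k ch x)
    rw [Wnn_eq_ofReal hk]
    exact this
  calc ∫⁻ x in s, (‖wgt k ch x‖₊ : ℝ≥0∞) ∂volume
      = ∫⁻ x in s, Wnn k ch x ∂volume := by
        apply lintegral_congr
        intro x
        exact heq x
    _ ≤ ∫⁻ x, Wnn k ch x ∂volume := setLIntegral_le_lintegral _ _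
    _ < ⊤ := lintegral_Wnn_lt_top hk

lemma sgm_integrableOn (hk : 1 ≤ k) {p : ℝ} (hp : 1 < p) {s : Set ℝ}
    (hs : MeasurableSet s) (hvs : volume s < ⊤) :
    IntegrableOn (sgm p k ch) s volume := by
  apply Integrable.mono' (integrableOn_const (C := (1:ℝ)) hvs.ne)
  · exact (sgm_meas hk p).aestronglyMeasurable
  · apply Filter.Eventually.of_forall
    intro x
    rw [Real.norm_eq_abs, abs_of_nonneg (sgm_nonneg p k ch x)]
    exact sgm_le_one hk hp x

end Wint
section Sparse

/-- The main sparse Carleson-embedding bound. -/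
lemma sparse_bound (ε : ℝ) (hε0 : 0 < ε) (hε1 : ε < 1) (S : Set (ℝ × ℝ)) (hS : MSparse ε S)
    (L : ℝ × ℝ) (hL : 0 < len L) (F : Set (ℝ × ℝ)) (hFS : F ⊆ S)
    (hdc : ∀ Q ∈ S, ∀ R ∈ F, ivSet Q ⊆ ivSet R → Q ∈ F)
    (hFL : ∀ I ∈ F, ivSet I ⊆ ivSet L)
    (A : Set ℝ) (hA : MeasurableSet A)
    (d q : ℝ) (hd : 0 < d) (hq : 2 ≤ q)
    (f : ℝ × ℝ → ℝ)
    (hf : ∀ I ∈ F, f I = d * ((volume (ivSet I ∩ A)).toReal / len I) ^ q * len I)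
    (B : ℝ) (hB : d * (volume (ivSet L ∩ A)).toReal ≤ B) (hB0 : 0 ≤ B) :
    (∑' I : ↥F, f (I : ℝ × ℝ)) ≤ 4 * B / (1 - ε) := by
  classical
  have hε1' : (0:ℝ) < 1 - ε := by linarith
  set m : ℝ × ℝ → ℝ := fun I => (volume (ivSet I ∩ A)).toReal with hmdef
  have hSlt : ∀ I ∈ S, I.1 < I.2 := hS.2.1
  have htri := hS.2.2.1
  have hlen : ∀ I ∈ F, 0 < len I := by
    intro I hI; have := hSlt I (hFS hI); simp only [len]; linarith
  have hm0 : ∀ I, 0 ≤ m I := fun I => ENNReal.toReal_nonneg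
  have hvfin : ∀ I : ℝ × ℝ, volume (ivSet I ∩ A) ≠ ⊤ := by
    intro I
    exact ne_top_of_le_ne_top (by rw [vol_ivSet]; exact ENNReal.ofReal_ne_top)
      (measure_mono Set.inter_subset_left)
  have hmlen : ∀ I ∈ F, m I ≤ len I := by
    intro I hI
    rw [hmdef]
    apply ENNReal.toReal_le_of_le_ofReal (le_of_lt (hlen I hI))
    rw [← vol_ivSet]
    exact measure_mono Set.inter_subset_left
  have hmmono : ∀ I J : ℝ × ℝ, ivSet I ⊆ ivSet J → m I ≤ m J := by
    intro I J h
    exact ENNReal.toReal_mono (hvfin J) (measure_mono (Set.inter_subset_inter_left A h))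
  have hlenmono : ∀ I ∈ F, len I ≤ len L := by
    intro I hI
    have h1 := hSlt I (hFS hI)
    obtain ⟨h2, h3⟩ := (Set.Ico_subset_Ico_iff h1).mp (hFL I hI)
    simp only [len]; linarith
  have hnon : ∀ I ∈ F, (ivSet I).Nonempty := by
    intro I hI
    exact Set.nonempty_Ico.mpr (hSlt I (hFS hI))
  have hpair_eq : ∀ I ∈ S, ∀ J ∈ S, ivSet I = ivSet J → I = J := by
    intro I hI J hJ h
    exact (ivSet_eq_iff (hSlt I hI) (hSlt J hJ)).mp h
  -- nested-or-disjoint for members of F sharing a point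
  have hnest : ∀ x y : ↥F, ((ivSet ↑x ∩ ivSet ↑y).Nonempty) →
      ivSet (↑x : ℝ × ℝ) ⊆ ivSet (↑y : ℝ × ℝ) ∨ ivSet (↑y : ℝ × ℝ) ⊆ ivSet (↑x : ℝ × ℝ) := by
    intro x y hxy
    rcases htri ↑x (hFS x.2) ↑y (hFS y.2) with h | h | h
    · exact Or.inl h
    · exact Or.inr h
    · rw [h] at hxy; exact absurd hxy Set.not_nonempty_empty
  by_cases hsum : Summable fun I : ↥F => f (I : ℝ × ℝ)
  case neg =>
    rw [tsum_eq_zero_of_not_summable hsum]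
    exact div_nonneg (by linarith) (by linarith)
  case pos =>
  apply Summable.tsum_le_of_sum_le hsum
  intro G
  have fterm : ∀ x : ↥F, f (x : ℝ × ℝ) = d * (m ↑x / len ↑x) ^ q * len ↑x := fun x => by
    rw [hf ↑x x.2]
  have fnn : ∀ x : ↥F, 0 ≤ f (x : ℝ × ℝ) := by
    intro x
    rw [fterm]
    have h1 := hlen ↑x x.2
    have h2 := hm0 (↑x : ℝ × ℝ)
    positivity
  -- (1) finiteness of up-sets
  have hfin : ∀ δ : ℝ, 0 < δ → {x : ↥F | δ ≤ m ↑x}.Finite := by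
    intro δ hδ
    set δ' := d * (δ / len L) ^ q * δ with hδ'def
    have hδ'pos : 0 < δ' := by
      have : (0:ℝ) < (δ / len L) ^ q := Real.rpow_pos_of_pos (by positivity) q
      positivity
    have hsub : {x : ↥F | δ ≤ m ↑x} ⊆ {x : ↥F | δ' ≤ f ↑x} := by
      intro x hx
      simp only [Set.mem_setOf_eq] at hx ⊢
      have hlx := hlen ↑x x.2
      have hLx := hlenmono ↑x x.2
      have hlx2 : δ ≤ len ↑x := le_trans hx (hmlen ↑x x.2)
      have hu : δ / len L ≤ m ↑x / len ↑x := div_le_div₀ (hm0 _) hx hlx hLx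
      have hupow : (δ / len L) ^ q ≤ (m ↑x / len ↑x) ^ q :=
        Real.rpow_le_rpow (by positivity) hu (by linarith)
      rw [fterm]
      calc δ' = d * (δ / len L) ^ q * δ := rfl
        _ ≤ d * (δ / len L) ^ q * len ↑x := by
            apply mul_le_mul_of_nonneg_left hlx2
            have : (0:ℝ) < (δ / len L) ^ q := Real.rpow_pos_of_pos (by positivity) q
            positivity
        _ ≤ d * (m ↑x / len ↑x) ^ q * len ↑x := by
            apply mul_le_mul_of_nonneg_right (mul_le_mul_of_nonneg_left hupow hd.le)
            linarith
    have hev : ∀ᶠ x : ↥F in Filter.cofinite, f ↑x < δ' :=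
      hsum.tendsto_cofinite_zero.eventually (Filter.eventually_iff.mpr (Iio_mem_nhds hδ'pos))
    rw [Filter.eventually_cofinite] at hev
    exact (hev.subset (fun x hx => not_lt.mpr hx)).subset hsub
  -- (3) maximal dominators within a level
  have hmaxdom : ∀ lam : ℝ, 0 < lam → ∀ x : ↥F, lam * len ↑x < m ↑x →
      ∃ Mx : ↥F, (lam * len ↑Mx < m ↑Mx ∧ ivSet (↑x : ℝ × ℝ) ⊆ ivSet ↑Mx) ∧
        ∀ y : ↥F, lam * len ↑y < m ↑y → ivSet (↑Mx : ℝ × ℝ) ⊆ ivSet ↑y → y = Mx := by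
    intro lam hlam x hx
    have hmx : 0 < m ↑x := lt_of_le_of_lt (mul_nonneg hlam.le (hlen ↑x x.2).le) hx
    set D := {y : ↥F | (lam * len ↑y < m ↑y ∧ ivSet (↑x : ℝ × ℝ) ⊆ ivSet ↑y)} with hD
    have hDfin : D.Finite := by
      apply (hfin (m ↑x) hmx).subset
      rintro y ⟨_, hsub⟩
      exact hmmono ↑x ↑y hsub
    have hDne : D.Nonempty := ⟨x, hx, le_refl _⟩
    obtain ⟨Mx, hMxD, hmax⟩ := Set.exists_max_image D (fun y => len ↑y) hDfin hDne
    refine ⟨Mx, ⟨hMxD.1, hMxD.2⟩, ?_⟩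
    intro y hy hsub
    have hyD : y ∈ D := ⟨hy, le_trans hMxD.2 hsub⟩
    have hlen_le : len ↑y ≤ len ↑Mx := hmax y hyD
    have h1 := hSlt ↑Mx (hFS Mx.2)
    obtain ⟨h2, h3⟩ := (Set.Ico_subset_Ico_iff h1).mp hsub
    have hy1 : (↑y : ℝ × ℝ).1 = (↑Mx : ℝ × ℝ).1 := by simp only [len] at hlen_le; linarith
    have hy2 : (↑y : ℝ × ℝ).2 = (↑Mx : ℝ × ℝ).2 := by simp only [len] at hlen_le; linarith
    exact Subtype.ext (Prod.ext hy1 hy2)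
  -- (4) maximal member of S under R containing x
  have hmaxS : ∀ R : ↥F, ∀ x : ↥F, 0 < m ↑x → ivSet (↑x : ℝ × ℝ) ⊂ ivSet ↑R →
      ∃ Q : ↥F, (↑Q : ℝ × ℝ) ∈ maxIn S ↑R ∧ ivSet (↑x : ℝ × ℝ) ⊆ ivSet ↑Q := by
    intro R x hmx hstrict
    set C := {y : ↥F | ivSet (↑x : ℝ × ℝ) ⊆ ivSet ↑y ∧ ivSet (↑y : ℝ × ℝ) ⊂ ivSet ↑R} with hC
    have hCfin : C.Finite := by
      apply (hfin (m ↑x) hmx).subset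
      rintro y ⟨hsub, _⟩
      exact hmmono ↑x ↑y hsub
    have hCne : C.Nonempty := ⟨x, le_refl _, hstrict⟩
    obtain ⟨Q, hQC, hmax⟩ := Set.exists_max_image C (fun y => len ↑y) hCfin hCne
    refine ⟨Q, ⟨hFS Q.2, hQC.2, ?_⟩, hQC.1⟩
    intro Q' hQ'S hsub hstrict'
    have hQ'F : Q' ∈ F := hdc Q' hQ'S ↑R R.2 hstrict'.subset
    have hQ'C : (⟨Q', hQ'F⟩ : ↥F) ∈ C := ⟨le_trans hQC.1 hsub, hstrict'⟩
    have hlen_le : len Q' ≤ len ↑Q := hmax _ hQ'C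
    have h1 := hSlt ↑Q (hFS Q.2)
    obtain ⟨h2, h3⟩ := (Set.Ico_subset_Ico_iff h1).mp hsub
    have hy1 : Q'.1 = (↑Q : ℝ × ℝ).1 := by simp only [len] at hlen_le; linarith
    have hy2 : Q'.2 = (↑Q : ℝ × ℝ).2 := by simp only [len] at hlen_le; linarith
    simp only [ivSet, hy1, hy2]
  -- (5) E-sets
  set ES : ℝ × ℝ → Set ℝ := fun R => ivSet R \ ⋃ Q ∈ maxIn S R, ivSet Q with hESdef
  have hmaxsub : ∀ R : ℝ × ℝ, maxIn S R ⊆ S := fun R Q hQ => hQ.1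
  have hEmeas : ∀ R : ℝ × ℝ, MeasurableSet (ES R) := by
    intro R
    apply (ivSet_meas R).diff
    exact MeasurableSet.biUnion (hS.1.mono (hmaxsub R)) (fun Q _ => ivSet_meas Q)
  have hEsub : ∀ R : ℝ × ℝ, ES R ⊆ ivSet R := fun R => Set.diff_subset
  have hmaxdisj : ∀ (R Q1 Q2 : ℝ × ℝ), Q1 ∈ maxIn S R → Q2 ∈ maxIn S R → Q1 ≠ Q2 →
      ivSet Q1 ∩ ivSet Q2 = ∅ := by
    intro R Q1 Q2 h1 h2 hne12
    by_contra hne'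
    have hnonempty : (ivSet Q1 ∩ ivSet Q2).Nonempty := Set.nonempty_iff_ne_empty.mpr hne'
    have : ivSet Q1 ⊆ ivSet Q2 ∨ ivSet Q2 ⊆ ivSet Q1 := by
      rcases htri Q1 h1.1 Q2 h2.1 with h | h | h
      · exact Or.inl h
      · exact Or.inr h
      · rw [h] at hnonempty; exact absurd hnonempty Set.not_nonempty_empty
    rcases this with h | h
    · exact hne12 (hpair_eq Q1 h1.1 Q2 h2.1 (h1.2.2 Q2 h2.1 h h2.2.1).symm)
    · exact hne12 (hpair_eq Q1 h1.1 Q2 h2.1 (h2.2.2 Q1 h1.1 h h1.2.1))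
  have hEvol : ∀ R ∈ S, ENNReal.ofReal ((1 - ε) * len R) ≤ volume (ES R) := by
    intro R hR
    have hRlt := hSlt R hR
    have hRlen : (0:ℝ) < len R := by simp only [len]; linarith
    set U := ⋃ Q ∈ maxIn S R, ivSet Q with hU
    have hUsub : U ⊆ ivSet R := by
      apply Set.iUnion₂_subset
      intro Q hQ
      exact hQ.2.1.subset
    have hsummable : Summable (fun Q : ↥(maxIn S R) => len (Q : ℝ × ℝ)) := by
      apply summable_of_sum_le (c := len R)
      · intro Q
        have := hSlt ↑Q (hmaxsub R Q.2)
        simp only [Pi.zero_apply, len]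
        linarith
      · intro u
        have hdisj' : (↑u : Set ↥(maxIn S R)).PairwiseDisjoint
            (fun Q : ↥(maxIn S R) => ivSet (Q : ℝ × ℝ)) := by
          intro a _ b _ hab
          apply Set.disjoint_iff_inter_eq_empty.mpr
          exact hmaxdisj R ↑a ↑b a.2 b.2 (fun h => hab (Subtype.ext h))
        have hsum_eq : (∑ Q ∈ u, ENNReal.ofReal (len (Q : ℝ × ℝ)))
            = volume (⋃ Q ∈ u, ivSet (Q : ℝ × ℝ)) := by
          rw [measure_biUnion_finset hdisj' (fun Q _ => ivSet_meas _)]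
          apply Finset.sum_congr rfl
          intro Q _
          exact (vol_ivSet _).symm
        have hle : volume (⋃ Q ∈ u, ivSet (Q : ℝ × ℝ)) ≤ ENNReal.ofReal (len R) := by
          rw [← vol_ivSet]
          apply measure_mono
          apply Set.iUnion₂_subset
          intro Q _
          exact (Q.2).2.1.subset
        have : (∑ Q ∈ u, ENNReal.ofReal (len (Q : ℝ × ℝ))) ≤ ENNReal.ofReal (len R) :=
          hsum_eq ▸ hle
        have h2 : ENNReal.ofReal (∑ Q ∈ u, len (Q : ℝ × ℝ))
            ≤ ENNReal.ofReal (len R) := by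
          rw [ENNReal.ofReal_sum_of_nonneg]
          · exact this
          · intro Q _
            have := hSlt ↑Q (hmaxsub R Q.2)
            simp only [len]; linarith
        exact (ENNReal.ofReal_le_ofReal_iff hRlen.le).mp h2
    have hUvol : volume U ≤ ENNReal.ofReal (ε * len R) := by
      calc volume U ≤ ∑' Q : ↥(maxIn S R), volume (ivSet (Q : ℝ × ℝ)) :=
            measure_biUnion_le _ (hS.1.mono (hmaxsub R)) _
        _ = ∑' Q : ↥(maxIn S R), ENNReal.ofReal (len (Q : ℝ × ℝ)) := by
            apply tsum_congr; intro Q; exact vol_ivSet _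
        _ = ENNReal.ofReal (∑' Q : ↥(maxIn S R), len (Q : ℝ × ℝ)) := by
            rw [ENNReal.ofReal_tsum_of_nonneg ?_ hsummable]
            intro Q
            have := hSlt ↑Q (hmaxsub R Q.2)
            simp only [len]; linarith
        _ ≤ ENNReal.ofReal (ε * len R) :=
            ENNReal.ofReal_le_ofReal (hS.2.2.2 R hR)
    calc ENNReal.ofReal ((1 - ε) * len R)
        = ENNReal.ofReal (len R) - ENNReal.ofReal (ε * len R) := by
          rw [← ENNReal.ofReal_sub _ (by positivity)]
          congr 1
          ring
      _ ≤ volume (ivSet R) - volume U := by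
          rw [vol_ivSet]
          exact tsub_le_tsub (le_refl _) hUvol
      _ ≤ volume (ivSet R \ U) := le_measure_diff
  have hEdisj : ∀ x y : ↥F, 0 < m ↑x → 0 < m ↑y → x ≠ y →
      Disjoint (ES ↑x) (ES ↑y) := by
    intro x y hmx hmy hxy
    have hxyne : (↑x : ℝ × ℝ) ≠ ↑y := fun h => hxy (Subtype.ext h)
    rcases htri ↑x (hFS x.2) ↑y (hFS y.2) with h | h | h
    · have hstrict : ivSet (↑x : ℝ × ℝ) ⊂ ivSet (↑y : ℝ × ℝ) :=
        ⟨h, fun h' => hxyne (hpair_eq ↑x (hFS x.2) ↑y (hFS y.2) (le_antisymm h h'))⟩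
      obtain ⟨Q, hQ, hQsub⟩ := hmaxS y x hmx hstrict
      apply Set.disjoint_left.mpr
      intro z hzx hzy
      have hzQ : z ∈ ivSet (↑Q : ℝ × ℝ) := hQsub (hEsub ↑x hzx)
      exact hzy.2 (Set.mem_biUnion hQ hzQ)
    · have hstrict : ivSet (↑y : ℝ × ℝ) ⊂ ivSet (↑x : ℝ × ℝ) :=
        ⟨h, fun h' => hxyne (hpair_eq ↑x (hFS x.2) ↑y (hFS y.2) (le_antisymm h' h))⟩
      obtain ⟨Q, hQ, hQsub⟩ := hmaxS x y hmy hstrict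
      apply Set.disjoint_right.mpr
      intro z hzy hzx
      have hzQ : z ∈ ivSet (↑Q : ℝ × ℝ) := hQsub (hEsub ↑y hzy)
      exact hzx.2 (Set.mem_biUnion hQ hzQ)
    · apply Set.disjoint_left.mpr
      intro z hzx hzy
      have : z ∈ ivSet (↑x : ℝ × ℝ) ∩ ivSet (↑y : ℝ × ℝ) := ⟨hEsub ↑x hzx, hEsub ↑y hzy⟩
      rw [h] at this
      exact this
  -- (6) per-group bound via E-sets
  have hgroup : ∀ lam : ℝ, 0 < lam → ∀ (M : ↥F) (G' : Finset ↥F),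
      (∀ x ∈ G', lam * len (↑x : ℝ × ℝ) < m ↑x) →
      (∀ x ∈ G', ivSet (↑x : ℝ × ℝ) ⊆ ivSet ↑M) →
      (∑ x ∈ G', len (↑x : ℝ × ℝ)) ≤ len (↑M : ℝ × ℝ) / (1 - ε) := by
    intro lam hlam M G' hG'P hG'M
    have hmpos : ∀ x ∈ G', 0 < m ↑x := by
      intro x hx
      exact lt_of_le_of_lt (mul_nonneg hlam.le (hlen ↑x x.2).le) (hG'P x hx)
    have hESfin : ∀ x : ↥F, volume (ES ↑x) ≠ ⊤ := by
      intro x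
      exact ne_top_of_le_ne_top (by rw [vol_ivSet]; exact ENNReal.ofReal_ne_top)
        (measure_mono (hEsub ↑x))
    have key : (1 - ε) * (∑ x ∈ G', len (↑x : ℝ × ℝ)) ≤ len (↑M : ℝ × ℝ) := by
      calc (1 - ε) * (∑ x ∈ G', len (↑x : ℝ × ℝ))
          = ∑ x ∈ G', (1 - ε) * len (↑x : ℝ × ℝ) := Finset.mul_sum _ _ _
        _ ≤ ∑ x ∈ G', (volume (ES ↑x)).toReal := by
            apply Finset.sum_le_sum
            intro x hx
            exact (ENNReal.ofReal_le_iff_le_toReal (hESfin x)).mp (hEvol ↑x (hFS x.2))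
        _ = (∑ x ∈ G', volume (ES ↑x)).toReal := (ENNReal.toReal_sum (fun x _ => hESfin x)).symm
        _ = (volume (⋃ x ∈ G', ES ↑x)).toReal := by
            congr 1
            refine (measure_biUnion_finset (μ := volume) (s := G')
              (f := fun x : ↥F => ES ↑x) ?_ (fun x _ => hEmeas _)).symm
            intro a ha b hb hab
            exact hEdisj a b (hmpos a ha) (hmpos b hb) hab
        _ ≤ (volume (ivSet (↑M : ℝ × ℝ))).toReal := by
            apply ENNReal.toReal_mono (by rw [vol_ivSet]; exact ENNReal.ofReal_ne_top)
            apply measure_mono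
            apply Set.iUnion₂_subset
            intro x hx
            exact (hEsub ↑x).trans (hG'M x hx)
        _ = len (↑M : ℝ × ℝ) := by
            rw [vol_ivSet, ENNReal.toReal_ofReal (le_of_lt (hlen ↑M M.2))]
    rw [le_div_iff₀ hε1']
    linarith [key]
  -- (7) per-λ bound
  have hlam : ∀ lam : ℝ, 0 < lam → ∀ (G' : Finset ↥F),
      (∀ x ∈ G', lam * len (↑x : ℝ × ℝ) < m ↑x) →
      (∑ x ∈ G', len (↑x : ℝ × ℝ)) ≤ (volume (ivSet L ∩ A)).toReal / (lam * (1 - ε)) := by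
    intro lam hlam0 G' hG'P
    set gx : ↥F → ↥F := fun x => if h : lam * len (↑x : ℝ × ℝ) < m ↑x
      then (hmaxdom lam hlam0 x h).choose else x with hgx
    have hgx_spec : ∀ x ∈ G', (lam * len (↑(gx x) : ℝ × ℝ) < m ↑(gx x)
        ∧ ivSet (↑x : ℝ × ℝ) ⊆ ivSet ↑(gx x))
        ∧ ∀ y : ↥F, lam * len ↑y < m ↑y → ivSet (↑(gx x) : ℝ × ℝ) ⊆ ivSet ↑y → y = gx x := by
      intro x hx
      have h := hG'P x hx
      rw [hgx]
      simp only [dif_pos h]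
      exact (hmaxdom lam hlam0 x h).choose_spec
    set T := G'.image gx with hT
    have hTprop : ∀ M ∈ T, lam * len (↑M : ℝ × ℝ) < m ↑M
        ∧ ∀ y : ↥F, lam * len ↑y < m ↑y → ivSet (↑M : ℝ × ℝ) ⊆ ivSet ↑y → y = M := by
      intro M hM
      obtain ⟨x, hx, rfl⟩ := Finset.mem_image.mp hM
      exact ⟨((hgx_spec x hx).1).1, (hgx_spec x hx).2⟩
    have hTdisj : ∀ M1 ∈ T, ∀ M2 ∈ T, M1 ≠ M2 →
        ivSet (↑M1 : ℝ × ℝ) ∩ ivSet (↑M2 : ℝ × ℝ) = ∅ := by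
      intro M1 h1 M2 h2 hne12
      by_contra hne'
      have hnonempty : (ivSet (↑M1:ℝ×ℝ) ∩ ivSet (↑M2:ℝ×ℝ)).Nonempty :=
        Set.nonempty_iff_ne_empty.mpr hne'
      rcases hnest M1 M2 hnonempty with h | h
      · exact hne12 ((hTprop M1 h1).2 M2 (hTprop M2 h2).1 h).symm
      · exact hne12 ((hTprop M2 h2).2 M1 (hTprop M1 h1).1 h)
    -- partition of G' along T
    set fib : ↥F → Finset ↥F := fun M => G'.filter
        (fun x : ↥F => ivSet (x : ℝ × ℝ) ⊆ ivSet (M : ℝ × ℝ)) with hfib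
    have hfibmem : ∀ (M : ↥F) (x : ↥F), x ∈ fib M ↔ x ∈ G' ∧
        ivSet (x : ℝ × ℝ) ⊆ ivSet (M : ℝ × ℝ) := by
      intro M x
      rw [hfib]
      exact Finset.mem_filter
    have hcover : G' = T.biUnion fib := by
      apply Finset.ext
      intro x
      simp only [Finset.mem_biUnion]
      constructor
      · intro hx
        exact ⟨gx x, Finset.mem_image_of_mem gx hx,
          (hfibmem (gx x) x).mpr ⟨hx, ((hgx_spec x hx).1).2⟩⟩
      · rintro ⟨M, _, hx⟩
        exact ((hfibmem M x).mp hx).1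
    have hfilterdisj : (↑T : Set ↥F).PairwiseDisjoint fib := by
      intro M1 h1 M2 h2 hne12
      simp only [Function.onFun]
      rw [Finset.disjoint_left]
      intro x hx1 hx2
      obtain ⟨_, hs1⟩ := (hfibmem M1 x).mp hx1
      obtain ⟨_, hs2⟩ := (hfibmem M2 x).mp hx2
      obtain ⟨z, hz⟩ := hnon ↑x x.2
      have : z ∈ ivSet (↑M1 : ℝ × ℝ) ∩ ivSet (↑M2 : ℝ × ℝ) := ⟨hs1 hz, hs2 hz⟩
      rw [hTdisj M1 h1 M2 h2 hne12] at this
      exact this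
    have hsplit : (∑ x ∈ G', len (↑x : ℝ × ℝ))
        = ∑ M ∈ T, ∑ x ∈ fib M, len (↑x : ℝ × ℝ) := by
      conv_lhs => rw [hcover]
      exact Finset.sum_biUnion hfilterdisj
    have hinner : ∀ M ∈ T, (∑ x ∈ fib M, len (↑x : ℝ × ℝ))
        ≤ len (↑M : ℝ × ℝ) / (1 - ε) := by
      intro M hM
      apply hgroup lam hlam0 M
      · intro x hx
        exact hG'P x ((hfibmem M x).mp hx).1
      · intro x hx
        exact ((hfibmem M x).mp hx).2
    have hTsum : (∑ M ∈ T, len (↑M : ℝ × ℝ)) ≤ (volume (ivSet L ∩ A)).toReal / lam := by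
      rw [le_div_iff₀ hlam0]
      have h1 : ∀ M ∈ T, len (↑M : ℝ × ℝ) * lam ≤ m ↑M := by
        intro M hM
        have := (hTprop M hM).1
        linarith
      calc (∑ M ∈ T, len (↑M : ℝ × ℝ)) * lam = ∑ M ∈ T, len (↑M : ℝ × ℝ) * lam := by
            rw [Finset.sum_mul]
        _ ≤ ∑ M ∈ T, m ↑M := Finset.sum_le_sum h1
        _ = (∑ M ∈ T, volume (ivSet (↑M : ℝ × ℝ) ∩ A)).toReal :=
            (ENNReal.toReal_sum (s := T) (f := fun M : ↥F => volume (ivSet (M : ℝ × ℝ) ∩ A))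
              (fun M _ => hvfin ↑M)).symm
        _ = (volume (⋃ M ∈ T, (ivSet (↑M : ℝ × ℝ) ∩ A))).toReal := by
            congr 1
            refine (measure_biUnion_finset (μ := volume) (s := T)
              (f := fun M : ↥F => ivSet (M : ℝ × ℝ) ∩ A) ?_
              (fun M _ => (ivSet_meas _).inter hA)).symm
            intro M1 h1' M2 h2' hne12
            apply Set.disjoint_left.mpr
            intro z hz1 hz2
            have : z ∈ ivSet (↑M1 : ℝ × ℝ) ∩ ivSet (↑M2 : ℝ × ℝ) := ⟨hz1.1, hz2.1⟩
            rw [hTdisj M1 h1' M2 h2' hne12] at this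
            exact this
        _ ≤ (volume (ivSet L ∩ A)).toReal := by
            apply ENNReal.toReal_mono (hvfin L)
            apply measure_mono
            apply Set.iUnion₂_subset
            intro M _
            exact Set.inter_subset_inter_left A (hFL ↑M M.2)
    calc (∑ x ∈ G', len (↑x : ℝ × ℝ))
        = ∑ M ∈ T, ∑ x ∈ fib M, len (↑x : ℝ × ℝ) := hsplit
      _ ≤ ∑ M ∈ T, len (↑M : ℝ × ℝ) / (1 - ε) := Finset.sum_le_sum hinner
      _ = (∑ M ∈ T, len (↑M : ℝ × ℝ)) / (1 - ε) := by rw [Finset.sum_div]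
      _ ≤ ((volume (ivSet L ∩ A)).toReal / lam) / (1 - ε) := by
          gcongr
      _ = (volume (ivSet L ∩ A)).toReal / (lam * (1 - ε)) := by
          rw [div_div]
  -- (8) final dyadic assembly
  set VLA := (volume (ivSet L ∩ A)).toReal with hVLA
  have hVLA0 : 0 ≤ VLA := ENNReal.toReal_nonneg
  have hdy : ∀ x : ↥F, 0 < m ↑x → ∃ n : ℕ,
      ((2:ℝ)⁻¹)^(n+1) * len (↑x : ℝ × ℝ) < m ↑x ∧ m ↑x ≤ ((2:ℝ)⁻¹)^n * len (↑x : ℝ × ℝ) := by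
    intro x hmx
    have hlx := hlen ↑x x.2
    have hu0 : 0 < m ↑x / len (↑x : ℝ × ℝ) := div_pos hmx hlx
    have hu1 : m ↑x / len (↑x : ℝ × ℝ) ≤ 1 := (div_le_one hlx).mpr (hmlen ↑x x.2)
    have hex : ∃ N : ℕ, ((2:ℝ)⁻¹)^N < m ↑x / len (↑x : ℝ × ℝ) :=
      exists_pow_lt_of_lt_one hu0 (by norm_num)
    have hspec := Nat.find_spec hex
    have hn₁pos : Nat.find hex ≠ 0 := by
      intro h0
      rw [h0, pow_zero] at hspec
      linarith
    obtain ⟨n, hn⟩ : ∃ n, Nat.find hex = n + 1 := ⟨Nat.find hex - 1, by omega⟩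
    have hmin := Nat.find_min hex (m := n) (by omega)
    push_neg at hmin
    rw [hn] at hspec
    refine ⟨n, ?_, ?_⟩
    · have := mul_lt_mul_of_pos_right hspec hlx
      rwa [div_mul_cancel₀ _ (ne_of_gt hlx)] at this
    · have := mul_le_mul_of_nonneg_right hmin hlx.le
      rwa [div_mul_cancel₀ _ (ne_of_gt hlx)] at this
  set nx : ↥F → ℕ := fun x => if h : 0 < m ↑x then (hdy x h).choose else 0 with hnx
  have hnx_spec : ∀ x : ↥F, 0 < m ↑x →
      ((2:ℝ)⁻¹)^(nx x + 1) * len (↑x : ℝ × ℝ) < m ↑x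
        ∧ m ↑x ≤ ((2:ℝ)⁻¹)^(nx x) * len (↑x : ℝ × ℝ) := by
    intro x h
    rw [hnx]
    simp only [dif_pos h]
    exact (hdy x h).choose_spec
  set G0 := G.filter (fun x : ↥F => 0 < m ↑x) with hG0
  have hzero : ∀ x ∈ G, x ∉ G0 → f ↑x = 0 := by
    intro x hx hx0
    have hnpos : ¬ 0 < m ↑x := by
      intro h
      exact hx0 (Finset.mem_filter.mpr ⟨hx, h⟩)
    have hm_eq : m ↑x = 0 := le_antisymm (not_lt.mp hnpos) (hm0 _)
    rw [fterm, hm_eq, zero_div, Real.zero_rpow (by linarith), mul_zero, zero_mul]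
  have hsum_eq : (∑ x ∈ G, f ↑x) = ∑ x ∈ G0, f ↑x :=
    (Finset.sum_subset (Finset.filter_subset _ _) hzero).symm
  set N := G0.sup nx with hN
  set Bn : ℕ → Finset ↥F := fun n => G0.filter (fun x => nx x = n) with hBn
  have hcover2 : G0 = (Finset.range (N+1)).biUnion Bn := by
    apply Finset.ext
    intro x
    simp only [Finset.mem_biUnion, Finset.mem_range]
    constructor
    · intro hx
      refine ⟨nx x, ?_, Finset.mem_filter.mpr ⟨hx, rfl⟩⟩
      have := Finset.le_sup (f := nx) hx
      omega
    · rintro ⟨n, _, hx⟩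
      exact (Finset.mem_filter.mp hx).1
  have hbanddisj : (↑(Finset.range (N+1)) : Set ℕ).PairwiseDisjoint Bn := by
    intro n1 _ n2 _ hne12
    simp only [Function.onFun]
    rw [Finset.disjoint_left]
    intro x hx1 hx2
    exact hne12 ((Finset.mem_filter.mp hx1).2.symm.trans (Finset.mem_filter.mp hx2).2)
  have hband : ∀ n : ℕ, (∑ x ∈ Bn n, f ↑x) ≤ (2 * (d * VLA) / (1-ε)) * ((2:ℝ)⁻¹)^n := by
    intro n
    have hP : ∀ x ∈ Bn n, ((2:ℝ)⁻¹)^(n+1) * len (↑x : ℝ × ℝ) < m ↑x := by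
      intro x hx
      obtain ⟨hxG0, hxn⟩ := Finset.mem_filter.mp hx
      have hmx : 0 < m ↑x := (Finset.mem_filter.mp hxG0).2
      have h := (hnx_spec x hmx).1
      rwa [hxn] at h
    have hlensum : (∑ x ∈ Bn n, len (↑x : ℝ × ℝ)) ≤ VLA / (((2:ℝ)⁻¹)^(n+1) * (1-ε)) :=
      hlam _ (by positivity) _ hP
    have hterm : ∀ x ∈ Bn n, f ↑x ≤ d * (((2:ℝ)⁻¹)^n)^2 * len (↑x : ℝ × ℝ) := by
      intro x hx
      obtain ⟨hxG0, hxn⟩ := Finset.mem_filter.mp hx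
      have hmx : 0 < m ↑x := (Finset.mem_filter.mp hxG0).2
      have hlx := hlen ↑x x.2
      have hu0 : 0 < m ↑x / len (↑x : ℝ × ℝ) := div_pos hmx hlx
      have hu1 : m ↑x / len (↑x : ℝ × ℝ) ≤ 1 := (div_le_one hlx).mpr (hmlen ↑x x.2)
      have hub : m ↑x / len (↑x : ℝ × ℝ) ≤ ((2:ℝ)⁻¹)^n := by
        have h := (hnx_spec x hmx).2
        rw [hxn] at h
        exact (div_le_iff₀ hlx).mpr h
      have h2 : (m ↑x / len (↑x : ℝ × ℝ)) ^ q ≤ (m ↑x / len (↑x : ℝ × ℝ)) ^ (2:ℝ) :=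
        Real.rpow_le_rpow_of_exponent_ge hu0 hu1 hq
      have h3 : (m ↑x / len (↑x : ℝ × ℝ)) ^ (2:ℝ) = (m ↑x / len (↑x : ℝ × ℝ)) ^ (2:ℕ) := by
        rw [← Real.rpow_natCast (m ↑x / len (↑x : ℝ × ℝ)) 2]
        norm_num
      have h4 : (m ↑x / len (↑x : ℝ × ℝ)) ^ (2:ℕ) ≤ (((2:ℝ)⁻¹)^n)^2 :=
        pow_le_pow_left₀ hu0.le hub 2
      rw [fterm]
      apply mul_le_mul_of_nonneg_right _ hlx.le
      apply mul_le_mul_of_nonneg_left _ hd.le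
      calc (m ↑x / len (↑x : ℝ × ℝ)) ^ q ≤ (m ↑x / len (↑x : ℝ × ℝ)) ^ (2:ℝ) := h2
        _ = (m ↑x / len (↑x : ℝ × ℝ)) ^ (2:ℕ) := h3
        _ ≤ (((2:ℝ)⁻¹)^n)^2 := h4
    have hpow2 : (((2:ℝ)⁻¹)^n)^2 / (((2:ℝ)⁻¹)^(n+1)) = 2 * ((2:ℝ)⁻¹)^n := by
      rw [pow_succ, div_eq_iff (by positivity)]
      ring
    calc (∑ x ∈ Bn n, f ↑x) ≤ ∑ x ∈ Bn n, d * (((2:ℝ)⁻¹)^n)^2 * len (↑x : ℝ × ℝ) :=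
          Finset.sum_le_sum hterm
      _ = d * (((2:ℝ)⁻¹)^n)^2 * (∑ x ∈ Bn n, len (↑x : ℝ × ℝ)) := by rw [Finset.mul_sum]
      _ ≤ d * (((2:ℝ)⁻¹)^n)^2 * (VLA / (((2:ℝ)⁻¹)^(n+1) * (1-ε))) := by
          apply mul_le_mul_of_nonneg_left hlensum (by positivity)
      _ = (d * VLA / (1-ε)) * ((((2:ℝ)⁻¹)^n)^2 / (((2:ℝ)⁻¹)^(n+1))) := by
          field_simp
      _ = (2 * (d * VLA) / (1-ε)) * ((2:ℝ)⁻¹)^n := by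
          rw [hpow2]
          ring
  calc (∑ x ∈ G, f ↑x) = ∑ x ∈ G0, f ↑x := hsum_eq
    _ = ∑ n ∈ Finset.range (N+1), ∑ x ∈ Bn n, f ↑x := by
        conv_lhs => rw [hcover2]
        exact Finset.sum_biUnion hbanddisj
    _ ≤ ∑ n ∈ Finset.range (N+1), (2 * (d * VLA) / (1-ε)) * ((2:ℝ)⁻¹)^n :=
        Finset.sum_le_sum (fun n _ => hband n)
    _ = (2 * (d * VLA) / (1-ε)) * (∑ n ∈ Finset.range (N+1), ((2:ℝ)⁻¹)^n) := by
        rw [Finset.mul_sum]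
    _ ≤ (2 * (d * VLA) / (1-ε)) * 2 := by
        apply mul_le_mul_of_nonneg_left _ (by positivity)
        rw [geom_sum_eq (by norm_num : (2:ℝ)⁻¹ ≠ 1)]
        have h2 : ((2:ℝ)⁻¹)^(N+1) ≤ 1 := pow_le_one₀ (by norm_num) (by norm_num)
        have h1 : (0:ℝ) < ((2:ℝ)⁻¹)^(N+1) := by positivity
        rw [div_le_iff_of_neg (by norm_num : (2:ℝ)⁻¹ - 1 < 0)]
        linarith
    _ ≤ 4 * B / (1 - ε) := by
        have heq : (2 * (d * VLA) / (1-ε)) * 2 = 4 * (d * VLA) / (1-ε) := by ring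
        rw [heq]
        gcongr

end Sparse
section Final

lemma rpow_term_w {c u ℓ p : ℝ} (hc : 0 < c) (hu : 0 ≤ u) (hp : 1 < p) :
    (c * u) ^ p * (c ^ (1 - p) * u) * ℓ = c * u ^ (p + 1) * ℓ := by
  rcases eq_or_lt_of_le hu with h0 | hu0
  · rw [← h0, mul_zero, mul_zero, Real.zero_rpow (by linarith), Real.zero_rpow (by linarith)]
    ring
  · rw [Real.mul_rpow hc.le hu0.le]
    have e1 : u ^ (p + 1) = u ^ p * u := by
      rw [Real.rpow_add hu0 p 1, Real.rpow_one]
    have e2 : c ^ p * c ^ (1 - p) = c := by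
      rw [← Real.rpow_add hc p (1 - p)]
      norm_num
    calc c ^ p * u ^ p * (c ^ (1 - p) * u) * ℓ = (c ^ p * c ^ (1 - p)) * (u ^ p * u) * ℓ := by
          ring
      _ = c * u ^ (p + 1) * ℓ := by rw [e2, ← e1]

lemma rpow_term_s {c u ℓ p : ℝ} (hc : 0 < c) (hu : 0 ≤ u) (hp : 1 < p) :
    (c ^ (1 - p) * u) ^ (p / (p - 1)) * (c * u) * ℓ
      = c ^ (1 - p) * u ^ (p / (p - 1) + 1) * ℓ := by
  have hp1 : (0:ℝ) < p - 1 := by linarith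
  have hq1 : 1 ≤ p / (p - 1) := (one_le_div hp1).mpr (by linarith)
  rcases eq_or_lt_of_le hu with h0 | hu0
  · rw [← h0, mul_zero, mul_zero, Real.zero_rpow (by linarith), Real.zero_rpow (by linarith)]
    ring
  · have hcp : (0:ℝ) < c ^ (1 - p) := Real.rpow_pos_of_pos hc _
    rw [Real.mul_rpow hcp.le hu0.le]
    have e0 : (1 - p) * (p / (p - 1)) = -p := by
      field_simp
      ring
    have e1 : (c ^ (1 - p)) ^ (p / (p - 1)) = c ^ (-p : ℝ) := by
      rw [← Real.rpow_mul hc.le, e0]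
    have e2 : c ^ (-p : ℝ) * c = c ^ (1 - p) := by
      nth_rewrite 2 [← Real.rpow_one c]
      rw [← Real.rpow_add hc]
      ring_nf
    have e3 : u ^ (p / (p - 1)) * u = u ^ (p / (p - 1) + 1) := by
      rw [Real.rpow_add hu0, Real.rpow_one]
    calc (c ^ (1 - p)) ^ (p / (p - 1)) * u ^ (p / (p - 1)) * (c * u) * ℓ
        = (c ^ (-p : ℝ) * c) * (u ^ (p / (p - 1)) * u) * ℓ := by rw [e1]; ring
      _ = c ^ (1 - p) * u ^ (p / (p - 1) + 1) * ℓ := by rw [e2, e3]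

end Final

theorem statement8' (p : ℝ) (hp : 1 < p) :
    ∃ C : ℝ, 0 < C ∧ ∀ k : ℕ, 3000 < k → ∀ ch : ℝ × ℝ → Bool,
      ∀ ε : ℝ, 0 < ε → ε < 1 → ∀ S : Set (ℝ × ℝ), MSparse ε S →
      (∀ I ∈ S, ivSet I ⊆ Set.Ico (0 : ℝ) 1) →
      ∀ L : ℝ × ℝ, 0 ≤ L.1 → L.1 < L.2 → L.2 ≤ 1 →
      ∀ K ∈ KK k, ivSet L ⊆ ivSet K →
        sumTest p (wgt k ch) (sgm p k ch)
            {I | I ∈ S ∧ ivSet I ⊆ ivSet L ∧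
              ∀ x ∈ ivSet I ∩ ivSet (mid K), wgt k ch x = 0 ∧ sgm p k ch x = 0} ≤
          C * mass (wgt k ch) L / (1 - ε) ∧
        sumTest (p / (p - 1)) (sgm p k ch) (wgt k ch)
            {I | I ∈ S ∧ ivSet I ⊆ ivSet L ∧
              ∀ x ∈ ivSet I ∩ ivSet (mid K), wgt k ch x = 0 ∧ sgm p k ch x = 0} ≤
          C * mass (sgm p k ch) L / (1 - ε) := by
  refine ⟨4, by norm_num, ?_⟩
  intro k hk3000 ch ε hε0 hε1 S hS hS01 L hL0 hL12 hL1 K hKK hLK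
  have hk : 1 ≤ k := by omega
  obtain ⟨i₀, hK⟩ := Set.mem_iUnion.mp hKK
  set c := coefw k i₀ with hc
  have hcpos : 0 < c := coefw_pos hk i₀
  set A := ivSet (IJ k ch (mid K)) with hA
  have hAmeas : MeasurableSet A := ivSet_meas _
  have hAsubK : A ⊆ ivSet K := IJ_sub hk hK
  have hAdisj : A ∩ ivSet (mid K) = ∅ := IJ_disj_self k ch (mid K)
  set F := {I : ℝ × ℝ | I ∈ S ∧ ivSet I ⊆ ivSet L ∧
      ∀ x ∈ ivSet I ∩ ivSet (mid K), wgt k ch x = 0 ∧ sgm p k ch x = 0} with hFdef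
  have hFS : F ⊆ S := fun I hI => hI.1
  have hFL : ∀ I ∈ F, ivSet I ⊆ ivSet L := fun I hI => hI.2.1
  have hdc : ∀ Q ∈ S, ∀ R ∈ F, ivSet Q ⊆ ivSet R → Q ∈ F := by
    intro Q hQ R hR hsub
    exact ⟨hQ, hsub.trans hR.2.1, fun x hx => hR.2.2 x ⟨hsub hx.1, hx.2⟩⟩
  have hLlen : 0 < len L := by simp only [len]; linarith
  have hwA : ∀ x ∈ A, wgt k ch x = c := by
    intro x hxa
    have hxK := hAsubK hxa
    have hxnm : x ∉ ivSet (mid K) := by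
      intro hm
      have hmem : x ∈ A ∩ ivSet (mid K) := ⟨hxa, hm⟩
      rw [hAdisj] at hmem
      exact hmem
    rw [wgt_on_K hk hK hxK hxnm, ← hA]
    exact Set.indicator_of_mem hxa _
  have hsA : ∀ x ∈ A, sgm p k ch x = c ^ (1 - p) := by
    intro x hxa
    unfold sgm
    rw [hwA x hxa, if_pos hcpos]
  have hwI : ∀ I ∈ F, ∀ x ∈ ivSet I, wgt k ch x = A.indicator (fun _ => c) x := by
    intro I hI x hx
    have hxL : x ∈ ivSet L := hI.2.1 hx
    have hxK : x ∈ ivSet K := hLK hxL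
    by_cases hmid : x ∈ ivSet (mid K)
    · rw [(hI.2.2 x ⟨hx, hmid⟩).1]
      symm
      apply Set.indicator_of_notMem
      intro hxa
      have hmem : x ∈ A ∩ ivSet (mid K) := ⟨hxa, hmid⟩
      rw [hAdisj] at hmem
      exact hmem
    · rw [wgt_on_K hk hK hxK hmid, ← hA]
  have hsI : ∀ I ∈ F, ∀ x ∈ ivSet I, sgm p k ch x
      = A.indicator (fun _ => c ^ (1 - p)) x := by
    intro I hI x hx
    by_cases hxa : x ∈ A
    · rw [Set.indicator_of_mem hxa, hsA x hxa]
    · rw [Set.indicator_of_notMem hxa]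
      have hw0 : wgt k ch x = 0 := by
        rw [hwI I hI x hx]
        exact Set.indicator_of_notMem hxa _
      unfold sgm
      rw [hw0]
      simp
  have hmassw : ∀ I ∈ F, mass (wgt k ch) I = c * (volume (ivSet I ∩ A)).toReal := by
    intro I hI
    unfold mass
    rw [setIntegral_congr_fun (ivSet_meas I) (hwI I hI)]
    rw [setIntegral_indicator hAmeas, setIntegral_const, smul_eq_mul, mul_comm, measureReal_def]
  have hmasss : ∀ I ∈ F, mass (sgm p k ch) I
      = c ^ (1 - p) * (volume (ivSet I ∩ A)).toReal := by
    intro I hI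
    unfold mass
    rw [setIntegral_congr_fun (ivSet_meas I) (hsI I hI)]
    rw [setIntegral_indicator hAmeas, setIntegral_const, smul_eq_mul, mul_comm, measureReal_def]
  have hvolL : volume (ivSet L) < ⊤ := by rw [vol_ivSet]; exact ENNReal.ofReal_lt_top
  have hindint : ∀ d : ℝ, IntegrableOn (A.indicator (fun _ => d)) (ivSet L) volume :=
    fun d => Integrable.indicator (integrableOn_const hvolL.ne) hAmeas
  have hindeq : ∀ d : ℝ, (∫ x in ivSet L, A.indicator (fun _ => d) x)
      = d * (volume (ivSet L ∩ A)).toReal := by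
    intro d
    rw [setIntegral_indicator hAmeas, setIntegral_const, smul_eq_mul, mul_comm, measureReal_def]
  have hwLlower : c * (volume (ivSet L ∩ A)).toReal ≤ mass (wgt k ch) L := by
    rw [← hindeq c]
    apply setIntegral_mono_on (hindint c) (wgt_integrableOn hk) (ivSet_meas L)
    intro x _
    by_cases hxa : x ∈ A
    · rw [Set.indicator_of_mem hxa, hwA x hxa]
    · rw [Set.indicator_of_notMem hxa]
      exact wgt_nonneg k ch x
  have hsLlower : c ^ (1 - p) * (volume (ivSet L ∩ A)).toReal ≤ mass (sgm p k ch) L := by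
    rw [← hindeq (c ^ (1 - p))]
    apply setIntegral_mono_on (hindint _) (sgm_integrableOn hk hp (ivSet_meas L) hvolL)
      (ivSet_meas L)
    intro x _
    by_cases hxa : x ∈ A
    · rw [Set.indicator_of_mem hxa, hsA x hxa]
    · rw [Set.indicator_of_notMem hxa]
      exact sgm_nonneg p k ch x
  have hVLA0 : 0 ≤ (volume (ivSet L ∩ A)).toReal := ENNReal.toReal_nonneg
  have hB0w : 0 ≤ mass (wgt k ch) L :=
    le_trans (mul_nonneg hcpos.le hVLA0) hwLlower
  have hB0s : 0 ≤ mass (sgm p k ch) L :=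
    le_trans (mul_nonneg (Real.rpow_pos_of_pos hcpos _).le hVLA0) hsLlower
  constructor
  · have hfw : ∀ I ∈ F, avg (wgt k ch) I ^ p * avg (sgm p k ch) I * len I
        = c * ((volume (ivSet I ∩ A)).toReal / len I) ^ (p + 1) * len I := by
      intro I hI
      have hl : 0 < len I := by
        have := hS.2.1 I (hFS hI)
        simp only [len]
        linarith
      unfold avg
      rw [hmassw I hI, hmasss I hI]
      rw [show c * (volume (ivSet I ∩ A)).toReal / len I
          = c * ((volume (ivSet I ∩ A)).toReal / len I) by ring]
      rw [show c ^ (1 - p) * (volume (ivSet I ∩ A)).toReal / len I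
          = c ^ (1 - p) * ((volume (ivSet I ∩ A)).toReal / len I) by ring]
      exact rpow_term_w hcpos (by positivity) hp
    have happ := sparse_bound ε hε0 hε1 S hS L hLlen F hFS hdc hFL A hAmeas c (p + 1)
      hcpos (by linarith)
      (fun I => avg (wgt k ch) I ^ p * avg (sgm p k ch) I * len I) hfw
      (mass (wgt k ch) L) hwLlower hB0w
    unfold sumTest
    exact happ
  · have hq1 : 1 ≤ p / (p - 1) := (one_le_div (by linarith)).mpr (by linarith)
    have hfs : ∀ I ∈ F, avg (sgm p k ch) I ^ (p / (p - 1)) * avg (wgt k ch) I * len I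
        = c ^ (1 - p) * ((volume (ivSet I ∩ A)).toReal / len I) ^ (p / (p - 1) + 1)
            * len I := by
      intro I hI
      have hl : 0 < len I := by
        have := hS.2.1 I (hFS hI)
        simp only [len]
        linarith
      unfold avg
      rw [hmassw I hI, hmasss I hI]
      rw [show c * (volume (ivSet I ∩ A)).toReal / len I
          = c * ((volume (ivSet I ∩ A)).toReal / len I) by ring]
      rw [show c ^ (1 - p) * (volume (ivSet I ∩ A)).toReal / len I
          = c ^ (1 - p) * ((volume (ivSet I ∩ A)).toReal / len I) by ring]
      exact rpow_term_s hcpos (by positivity) hp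
    have happ := sparse_bound ε hε0 hε1 S hS L hLlen F hFS hdc hFL A hAmeas
      (c ^ (1 - p)) (p / (p - 1) + 1) (Real.rpow_pos_of_pos hcpos _) (by linarith)
      (fun I => avg (sgm p k ch) I ^ (p / (p - 1)) * avg (wgt k ch) I * len I) hfs
      (mass (sgm p k ch) L) hsLlower hB0s
    unfold sumTest
    exact happ

/-- Lemma 4.7 of the paper: testing sums over the family of intervals `I ∈ 𝒮` contained in
`L` on which `w_k, σ_k` vanish on `I ∩ J` (with `K ∈ 𝐊`, `L ⊆ K`, `J := K^m`) are bounded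
by `C(p)·w_k(L)/(1-ε)` and `C(p)·σ_k(L)/(1-ε)`. -/
theorem statement8 (p : ℝ) (hp : 1 < p) :
    ∃ C : ℝ, 0 < C ∧ ∀ k : ℕ, 3000 < k → ∀ ch : ℝ × ℝ → Bool,
      ∀ ε : ℝ, 0 < ε → ε < 1 → ∀ S : Set (ℝ × ℝ), MSparse ε S →
      (∀ I ∈ S, ivSet I ⊆ Set.Ico (0 : ℝ) 1) →
      ∀ L : ℝ × ℝ, 0 ≤ L.1 → L.1 < L.2 → L.2 ≤ 1 →
      ∀ K ∈ KK k, ivSet L ⊆ ivSet K →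
        sumTest p (wgt k ch) (sgm p k ch)
            {I | I ∈ S ∧ ivSet I ⊆ ivSet L ∧
              ∀ x ∈ ivSet I ∩ ivSet (mid K), wgt k ch x = 0 ∧ sgm p k ch x = 0} ≤
          C * mass (wgt k ch) L / (1 - ε) ∧
        sumTest (p / (p - 1)) (sgm p k ch) (wgt k ch)
            {I | I ∈ S ∧ ivSet I ⊆ ivSet L ∧
              ∀ x ∈ ivSet I ∩ ivSet (mid K), wgt k ch x = 0 ∧ sgm p k ch x = 0} ≤
          C * mass (sgm p k ch) L / (1 - ε) := by
  exact statement8' p hp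

end RTpaper
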